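/- Exhaustion lemma for saturated pairs (abstract form): Let P be a partial order and let Sat ⊆ (P × P) × (l × l) be a relation ('the pair (p,q) is (i,j)-saturated') that is hereditary: if p' ≤ p, q' ≤ q and (p,q) is (i,j)-saturated then (p',q') is (i,j)-saturated. Suppose further that for any finite descending sequence construction as in the paper, failure of saturation below every pair of extensions for each of the l² color pairs leads to a contradiction via a pigeonhole on colors (Lemma: for every p,q ≤ p₀ and every M ∈ S_p, K ∈ T_q some color pair (i,j) makes M i-large in q and K j-large in p). Then there exist (i,j) ∈ l × l and p₁ ≤ p₀ such that for every p₂ ≤ p₁ there exist p, q ≤ p₂ with (p,q) (i,j)-saturated. -/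

import Mathlib

/-- `smallSubsets A` is `[A]^{<ℵ₁}`, the collection of countable subsets of `A`. -/
def smallSubsets {γ : Type*} (A : Set γ) : Set (Set γ) :=
  {M | M ⊆ A ∧ M.Countable}

/-- `C` is a club in `[A]^{<ℵ₁}`: a family of countable subsets of `A` that is
cofinal and closed under unions of countable increasing chains. -/
def IsClubIn {γ : Type*} (A : Set γ) (C : Set (Set γ)) : Prop :=
  C ⊆ smallSubsets A ∧
  (∀ N ∈ smallSubsets A, ∃ M ∈ C, N ⊆ M) ∧
  (∀ D : Set (Set γ), D ⊆ C → D.Nonempty → D.Countable → IsChain (· ⊆ ·) D →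
    ⋃₀ D ∈ C)

/-- `S` is stationary in `[A]^{<ℵ₁}`: a family of countable subsets of `A`
meeting every club in `[A]^{<ℵ₁}`. -/
def IsStationaryIn {γ : Type*} (A : Set γ) (S : Set (Set γ)) : Prop :=
  S ⊆ smallSubsets A ∧ ∀ C : Set (Set γ), IsClubIn A C → (S ∩ C).Nonempty

/-- A (candidate) condition in the countable stationary tower: a pair `⟨A, S⟩`
with `A` a set and `S` a family of countable subsets of `A`. -/
structure Cond (γ : Type*) where
  A : Set γ
  S : Set (Set γ)

/-- `⟨A, S⟩` is a genuine condition: `A` is nonempty and `S` is stationary in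
`[A]^{<ℵ₁}`. -/
def Cond.IsCond {γ : Type*} (p : Cond γ) : Prop :=
  p.A.Nonempty ∧ IsStationaryIn p.A p.S

/-- The tower ordering: `q ≤ p` iff `q.A ⊇ p.A` and `q.S ⊆ (p.S)↑q.A`. -/
def Cond.le {γ : Type*} (q p : Cond γ) : Prop :=
  p.A ⊆ q.A ∧ q.S ⊆ {M | M ⊆ q.A ∧ M.Countable ∧ M ∩ p.A ∈ p.S}

/-- `𝒦 c i M q` is the set of `K ∈ q.S` with `F M ≠ F K` and
`c (F M) (F K) = i`. -/
def largeSet {γ : Type*} {l : ℕ} (F : Set γ → γ) (c : γ → γ → Fin l)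
    (i : Fin l) (M : Set γ) (q : Cond γ) : Set (Set γ) :=
  {K ∈ q.S | F M ≠ F K ∧ c (F M) (F K) = i}

/-- `M` is `i`-large in the condition `q` w.r.t. the coloring `c`. -/
def ILarge {γ : Type*} {l : ℕ} (F : Set γ → γ) (c : γ → γ → Fin l)
    (M : Set γ) (q : Cond γ) (i : Fin l) : Prop :=
  IsStationaryIn q.A (largeSet F c i M q)

/-- The pair `(p, q)` is `(i,j)`-saturated w.r.t. `c`: below every pair of
extensions, stationarily many `M` are `i`-large in the second coordinate and
stationarily many `K` are `j`-large in the first. -/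
def Saturated {γ : Type*} {l : ℕ} (F : Set γ → γ) (c : γ → γ → Fin l)
    (p q : Cond γ) (i j : Fin l) : Prop :=
  ∀ p' : Cond γ, p'.IsCond → p'.le p → ∀ q' : Cond γ, q'.IsCond → q'.le q →
    IsStationaryIn p'.A {M ∈ p'.S | ILarge F c M q' i} ∧
    IsStationaryIn q'.A {K ∈ q'.S | ILarge F c K p' j}


section AuxProofs
open Set
variable {γ : Type*}

variable {γ : Type*}

lemma smallSubsets_isClub (A : Set γ) : IsClubIn A (smallSubsets A) := by
  refine ⟨subset_rfl, fun N hN => ⟨N, hN, subset_rfl⟩, ?_⟩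
  intro D hD _ hcnt _
  exact ⟨fun x hx => by rcases hx with ⟨t, htD, hxt⟩; exact (hD htD).1 hxt,
    Set.Countable.sUnion hcnt (fun t ht => (hD ht).2)⟩

lemma IsStationaryIn.nonempty' {A : Set γ} {S : Set (Set γ)}
    (h : IsStationaryIn A S) : S.Nonempty := by
  obtain ⟨x, hx, -⟩ := h.2 _ (smallSubsets_isClub A)
  exact ⟨x, hx⟩

lemma finset_subset_chain_sUnion {D : Set (Set γ)} (hne : D.Nonempty)
    (hch : IsChain (· ⊆ ·) D) :
    ∀ e : Finset γ, ↑e ⊆ ⋃₀ D → ∃ d ∈ D, ↑e ⊆ d := by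
  classical
  intro e
  induction e using Finset.induction_on with
  | empty => exact fun _ => ⟨hne.choose, hne.choose_spec, by simp⟩
  | insert x s hx ih =>
    intro hsub
    have hxs : (x : γ) ∈ ⋃₀ D := hsub (by simp)
    obtain ⟨dx, hdx, hxdx⟩ := hxs
    obtain ⟨d, hd, hsd⟩ := ih (fun y hy => hsub (by simp [hy]))
    rcases eq_or_ne dx d with rfl | hne'
    · exact ⟨dx, hdx, by
        intro y hy
        rcases Finset.mem_insert.1 (by exact_mod_cast hy) with rfl | hy'
        · exact hxdx
        · exact hsd hy'⟩
    · rcases hch hdx hd hne' with h1 | h1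
      · exact ⟨d, hd, by
          intro y hy
          rcases Finset.mem_insert.1 (by exact_mod_cast hy) with rfl | hy'
          · exact h1 hxdx
          · exact hsd hy'⟩
      · exact ⟨dx, hdx, by
          intro y hy
          rcases Finset.mem_insert.1 (by exact_mod_cast hy) with rfl | hy'
          · exact hxdx
          · exact h1 (hsd hy')⟩

lemma finset_subset_monotone_iUnion {f : ℕ → Set γ} (hf : Monotone f) :
    ∀ e : Finset γ, ↑e ⊆ (⋃ n, f n) → ∃ n, ↑e ⊆ f n := by
  classical
  intro e
  induction e using Finset.induction_on with
  | empty => exact fun _ => ⟨0, by simp⟩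
  | insert x s hx ih =>
    intro hsub
    obtain ⟨m, hm⟩ : ∃ m, x ∈ f m := by
      simpa using hsub (show x ∈ (↑(insert x s) : Set γ) by simp)
    obtain ⟨n, hn⟩ := ih (fun y hy => hsub (by simp [hy]))
    refine ⟨max m n, ?_⟩
    intro y hy
    rcases Finset.mem_insert.1 (by exact_mod_cast hy) with rfl | hy'
    · exact hf (le_max_left m n) hm
    · exact hf (le_max_right m n) (hn hy')

variable {γ : Type*}

lemma IsClubIn.inter' {A : Set γ} {C D : Set (Set γ)} (hC : IsClubIn A C)
    (hD : IsClubIn A D) : IsClubIn A (C ∩ D) := by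
  classical
  obtain ⟨hC1, hC2, hC3⟩ := hC
  obtain ⟨hD1, hD2, hD3⟩ := hD
  refine ⟨fun x hx => hC1 hx.1, ?_, ?_⟩
  · intro N hN
    -- total choice functions
    let g1 : Set γ → Set γ := fun X => if h : X ∈ smallSubsets A then (hC2 X h).choose else X
    let g2 : Set γ → Set γ := fun X => if h : X ∈ smallSubsets A then (hD2 X h).choose else X
    have hg1 : ∀ X ∈ smallSubsets A, g1 X ∈ C ∧ X ⊆ g1 X := by
      intro X hX
      simp only [g1, dif_pos hX]
      exact ⟨(hC2 X hX).choose_spec.1, (hC2 X hX).choose_spec.2⟩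
    have hg2 : ∀ X ∈ smallSubsets A, g2 X ∈ D ∧ X ⊆ g2 X := by
      intro X hX
      simp only [g2, dif_pos hX]
      exact ⟨(hD2 X hX).choose_spec.1, (hD2 X hX).choose_spec.2⟩
    -- the chain
    let a : ℕ → Set γ := fun n => Nat.rec (g1 N) (fun _ x => g1 (g2 x)) n
    have ha0 : a 0 = g1 N := rfl
    have haS : ∀ n, a (n + 1) = g1 (g2 (a n)) := fun n => rfl
    have haC : ∀ n, a n ∈ C := by
      intro n
      induction n with
      | zero => exact (hg1 N hN).1
      | succ n ih =>
        rw [haS]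
        exact (hg1 _ (hD1 (hg2 _ (hC1 ih)).1)).1
    have hbD : ∀ n, g2 (a n) ∈ D := fun n => (hg2 _ (hC1 (haC n))).1
    have hab : ∀ n, a n ⊆ g2 (a n) := fun n => (hg2 _ (hC1 (haC n))).2
    have hba : ∀ n, g2 (a n) ⊆ a (n + 1) := by
      intro n; rw [haS]; exact (hg1 _ (hD1 (hbD n))).2
    have hamono : Monotone a := monotone_nat_of_le_succ (fun n => (hab n).trans (hba n))
    have hchain : ∀ f : ℕ → Set γ, Monotone f → IsChain (· ⊆ ·) (Set.range f) := by
      intro f hf x hx y hy _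
      obtain ⟨m, rfl⟩ := hx; obtain ⟨n, rfl⟩ := hy
      rcases le_total m n with h | h
      · exact Or.inl (hf h)
      · exact Or.inr (hf h)
    have hbmono : Monotone (fun n => g2 (a n)) :=
      monotone_nat_of_le_succ (fun n => (hba n).trans (hab (n + 1)))
    have hUa : ⋃₀ Set.range a ∈ C :=
      hC3 _ (by rintro x ⟨n, rfl⟩; exact haC n) (Set.range_nonempty a)
        (Set.countable_range a) (hchain a hamono)
    have hUb : ⋃₀ Set.range (fun n => g2 (a n)) ∈ D :=
      hD3 _ (by rintro x ⟨n, rfl⟩; exact hbD n) (Set.range_nonempty _)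
        (Set.countable_range _) (hchain _ hbmono)
    have heq : ⋃₀ Set.range a = ⋃₀ Set.range (fun n => g2 (a n)) := by
      rw [Set.sUnion_range, Set.sUnion_range]
      apply Set.Subset.antisymm
      · exact Set.iUnion_mono (fun n => hab n)
      · exact Set.iUnion_subset (fun n => (hba n).trans (Set.subset_iUnion a (n + 1)))
    refine ⟨⋃₀ Set.range a, ⟨hUa, heq ▸ hUb⟩, ?_⟩
    exact ((hg1 N hN).2).trans (by rw [Set.sUnion_range]; exact Set.subset_iUnion a 0)
  · intro E hE hne hcnt hch
    exact ⟨hC3 E (fun x hx => (hE hx).1) hne hcnt hch,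
      hD3 E (fun x hx => (hE hx).2) hne hcnt hch⟩

lemma stat_diff {A : Set γ} {S T : Set (Set γ)} (hS : IsStationaryIn A S)
    (hT : T ⊆ smallSubsets A) (hTn : ¬ IsStationaryIn A T) :
    IsStationaryIn A (S \ T) := by
  have : ∃ C, IsClubIn A C ∧ T ∩ C = ∅ := by
    by_contra h
    push_neg at h
    exact hTn ⟨hT, fun C hC => h C hC⟩
  obtain ⟨C, hC, hTC⟩ := this
  refine ⟨fun x hx => hS.1 hx.1, ?_⟩
  intro E hE
  obtain ⟨x, hxS, hxC, hxE⟩ := hS.2 (C ∩ E) (hC.inter' hE)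
  refine ⟨x, ⟨hxS, fun hxT => ?_⟩, hxE⟩
  exact absurd (Set.mem_inter hxT hxC) (by rw [hTC]; exact fun h => h)

variable {γ : Type*}

/-- canonical "hulls" indexed by finite sets, monotone by construction -/
noncomputable def MF (h : Set γ → Set γ) : Finset γ → Set γ := fun e =>
  h (↑e ∪ ⋃ (e' : Finset γ) (_ : e' ⊂ e), MF h e')
termination_by e => e.card
decreasing_by exact Finset.card_lt_card (by assumption)

lemma MF_eq (h : Set γ → Set γ) (e : Finset γ) :
    MF h e = h (↑e ∪ ⋃ (e' : Finset γ) (_ : e' ⊂ e), MF h e') := by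
  rw [MF]

section MFprops
variable {C : Set (Set γ)} {h : Set γ → Set γ}
  (hmem : ∀ X : Set γ, X.Countable → h X ∈ C)
  (hext : ∀ X : Set γ, X.Countable → X ⊆ h X)
  (hCc : ∀ M ∈ C, M.Countable)

include hmem hext hCc

lemma MF_mem : ∀ e : Finset γ, MF h e ∈ C := by
  classical
  intro e
  induction e using Finset.strongInduction with
  | _ e ih =>
    have harg : ((↑e : Set γ) ∪ ⋃ (e' : Finset γ) (_ : e' ⊂ e), MF h e').Countable := by
      apply Set.Countable.union e.countable_toSet
      have hfin : ({x : Finset γ | x ⊂ e}).Countable := by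
        apply Set.Finite.countable
        apply Set.Finite.subset (e.powerset.finite_toSet)
        intro x hx
        simpa using hx.1
      exact Set.Countable.biUnion hfin (fun e' he' => hCc _ (ih e' he'))
    rw [MF_eq]
    exact hmem _ harg

lemma MF_arg_countable (e : Finset γ) :
    ((↑e : Set γ) ∪ ⋃ (e' : Finset γ) (_ : e' ⊂ e), MF h e').Countable := by
  classical
  apply Set.Countable.union e.countable_toSet
  have hfin : ({x : Finset γ | x ⊂ e}).Countable := by
    apply Set.Finite.countable
    apply Set.Finite.subset (e.powerset.finite_toSet)
    intro x hx
    simpa using hx.1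
  exact Set.Countable.biUnion hfin (fun e' _ => hCc _ (MF_mem hmem hext hCc e'))

lemma MF_self_subset (e : Finset γ) : (↑e : Set γ) ⊆ MF h e := by
  rw [MF_eq]
  exact (Set.subset_union_left).trans (hext _ (MF_arg_countable hmem hext hCc e))

lemma MF_mono {e₁ e₂ : Finset γ} (hsub : e₁ ⊆ e₂) : MF h e₁ ⊆ MF h e₂ := by
  rcases eq_or_ne e₁ e₂ with rfl | hne
  · exact subset_rfl
  · have hss : e₁ ⊂ e₂ := lt_of_le_of_ne hsub hne
    have : MF h e₁ ⊆ ⋃ (e' : Finset γ) (_ : e' ⊂ e₂), MF h e' := by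
      intro x hx
      exact Set.mem_iUnion.2 ⟨e₁, Set.mem_iUnion.2 ⟨hss, hx⟩⟩
    conv_rhs => rw [MF_eq]
    exact this.trans ((Set.subset_union_right).trans
      (hext _ (MF_arg_countable hmem hext hCc e₂)))

end MFprops

lemma countable_finsets_of_countable {N : Set γ} (hN : N.Countable) :
    ({e : Finset γ | ↑e ⊆ N}).Countable := by
  have h1 : ({t : Set γ | t.Finite ∧ t ⊆ N}).Countable :=
    Set.countable_setOf_finite_subset hN
  have h2 : ({e : Finset γ | ↑e ⊆ N}) ⊆
      (fun e : Finset γ => (↑e : Set γ)) ⁻¹' {t : Set γ | t.Finite ∧ t ⊆ N} := by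
    intro e he
    exact ⟨e.finite_toSet, he⟩
  exact Set.Countable.mono h2 (h1.preimage Finset.coe_injective)

/-- The lifting lemma: a stationary set in `[A]` lifts to a stationary set in `[univ]`. -/
lemma lift_stationary {A : Set γ} {S : Set (Set γ)} (hS : IsStationaryIn A S) :
    IsStationaryIn (Set.univ : Set γ) {M | M.Countable ∧ M ∩ A ∈ S} := by
  classical
  constructor
  · exact fun M hM => ⟨Set.subset_univ M, hM.1⟩
  · intro C hC
    obtain ⟨hC1, hC2, hC3⟩ := hC
    have hCc : ∀ M ∈ C, M.Countable := fun M hM => (hC1 hM).2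
    have hc' : ∀ X : Set γ, X.Countable → ∃ M ∈ C, X ⊆ M :=
      fun X hX => hC2 X ⟨Set.subset_univ X, hX⟩
    let h : Set γ → Set γ := fun X => if hX : X.Countable then (hc' X hX).choose else X
    have hmem : ∀ X : Set γ, X.Countable → h X ∈ C := by
      intro X hX
      simp only [h, dif_pos hX]
      exact (hc' X hX).choose_spec.1
    have hext : ∀ X : Set γ, X.Countable → X ⊆ h X := by
      intro X hX
      simp only [h, dif_pos hX]
      exact (hc' X hX).choose_spec.2
    -- the induced club on [A]
    set D : Set (Set γ) :=
      {N | N ⊆ A ∧ N.Countable ∧ ∀ e : Finset γ, ↑e ⊆ N → MF h e ∩ A ⊆ N} with hD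
    have hDclub : IsClubIn A D := by
      refine ⟨fun N hN => ⟨hN.1, hN.2.1⟩, ?_, ?_⟩
      · intro N₀ hN₀
        let seq : ℕ → Set γ := fun n => Nat.rec N₀
          (fun _ X => X ∪ ⋃ e ∈ {e : Finset γ | ↑e ⊆ X}, (MF h e ∩ A)) n
        have hseqS : ∀ n, seq (n + 1) =
            seq n ∪ ⋃ e ∈ {e : Finset γ | ↑e ⊆ seq n}, (MF h e ∩ A) := fun n => rfl
        have hseqgood : ∀ n, seq n ⊆ A ∧ (seq n).Countable := by
          intro n
          induction n with
          | zero => exact ⟨hN₀.1, hN₀.2⟩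
          | succ n ih =>
            rw [hseqS]
            constructor
            · apply Set.union_subset ih.1
              exact Set.iUnion₂_subset (fun e _ => Set.inter_subset_right)
            · apply Set.Countable.union ih.2
              exact Set.Countable.biUnion (countable_finsets_of_countable ih.2)
                (fun e _ => (hCc _ (MF_mem hmem hext hCc e)).mono Set.inter_subset_left)
        have hseqmono : Monotone seq :=
          monotone_nat_of_le_succ (fun n => by rw [hseqS]; exact Set.subset_union_left)
        refine ⟨⋃ n, seq n, ⟨?_, ?_, ?_⟩, ?_⟩
        · exact Set.iUnion_subset (fun n => (hseqgood n).1)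
        · exact Set.countable_iUnion (fun n => (hseqgood n).2)
        · intro e he
          obtain ⟨n, hn⟩ := finset_subset_monotone_iUnion hseqmono e he
          have : MF h e ∩ A ⊆ seq (n + 1) := by
            rw [hseqS]
            refine Set.subset_union_of_subset_right ?_ _
            exact Set.subset_biUnion_of_mem (u := fun e => MF h e ∩ A) hn
          exact this.trans (Set.subset_iUnion seq (n + 1))
        · exact Set.subset_iUnion seq 0
      · intro E hE hne hcnt hch
        refine ⟨?_, ?_, ?_⟩
        · exact Set.sUnion_subset (fun t ht => (hE ht).1)
        · exact Set.Countable.sUnion hcnt (fun t ht => (hE ht).2.1)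
        · intro e he
          obtain ⟨d, hd, hed⟩ := finset_subset_chain_sUnion hne hch e he
          exact ((hE hd).2.2 e hed).trans (Set.subset_sUnion_of_mem hd)
    obtain ⟨N, hNS, hND⟩ := hS.2 D hDclub
    rcases N.eq_empty_or_nonempty with rfl | hNne
    · refine ⟨MF h ∅, ⟨hCc _ (MF_mem hmem hext hCc ∅), ?_⟩, MF_mem hmem hext hCc ∅⟩
      have : MF h ∅ ∩ A ⊆ (∅ : Set γ) := hND.2.2 ∅ (by simp)
      rw [Set.subset_empty_iff.1 this]
      exact hNS
    · obtain ⟨f, hf⟩ := (hND.2.1).exists_eq_range hNne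
      let E : ℕ → Finset γ := fun n => Finset.image f (Finset.range (n + 1))
      have hEN : ∀ n, (↑(E n) : Set γ) ⊆ N := by
        intro n x hx
        simp only [E, Finset.coe_image, Set.mem_image] at hx
        obtain ⟨m, _, rfl⟩ := hx
        rw [hf]; exact Set.mem_range_self m
      have hEmono : ∀ m n, m ≤ n → E m ⊆ E n := fun m n hmn =>
        Finset.image_subset_image (Finset.range_subset_range.2 (by omega))
      let K : ℕ → Set γ := fun n => MF h (E n)
      have hKmono : Monotone K := fun m n hmn => MF_mono hmem hext hCc (hEmono m n hmn)
      have hKC : ∀ n, K n ∈ C := fun n => MF_mem hmem hext hCc (E n)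
      have hchain : IsChain (· ⊆ ·) (Set.range K) := by
        rintro x ⟨m, rfl⟩ y ⟨n, rfl⟩ _
        rcases le_total m n with hmn | hmn
        · exact Or.inl (hKmono hmn)
        · exact Or.inr (hKmono hmn)
      have hM : ⋃₀ Set.range K ∈ C :=
        hC3 _ (by rintro x ⟨n, rfl⟩; exact hKC n) (Set.range_nonempty K)
          (Set.countable_range K) hchain
      refine ⟨⋃₀ Set.range K, ⟨hCc _ hM, ?_⟩, hM⟩
      have heq : (⋃₀ Set.range K) ∩ A = N := by
        apply Set.Subset.antisymm
        · rw [Set.sUnion_range]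
          rw [Set.iUnion_inter]
          exact Set.iUnion_subset (fun n => hND.2.2 (E n) (hEN n))
        · intro x hx
          have hxA : x ∈ A := hND.1 hx
          have : x ∈ Set.range f := by rw [← hf]; exact hx
          obtain ⟨n, rfl⟩ := this
          have hxE : f n ∈ (↑(E n) : Set γ) := by
            simp only [E, Finset.coe_image]
            exact ⟨n, by simp, rfl⟩
          have : f n ∈ K n := MF_self_subset hmem hext hCc (E n) hxE
          exact ⟨(by rw [Set.sUnion_range]; exact Set.mem_iUnion.2 ⟨n, this⟩), hxA⟩
      rw [heq]
      exact hNS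

end AuxProofs

section Aux5
open Set
variable {γ : Type*}
/-- reflexivity of the tower order for genuine conditions -/
lemma Cond.le_refl' {p : Cond γ} (hp : p.IsCond) : p.le p := by
  refine ⟨subset_rfl, fun M hM => ?_⟩
  have h1 := hp.2.1 hM
  exact ⟨h1.1, h1.2, by rwa [Set.inter_eq_self_of_subset_left h1.1]⟩

/-- transitivity of the tower order -/
lemma Cond.le_trans' {a b c : Cond γ} (hab : a.le b) (hbc : b.le c) : a.le c := by
  refine ⟨hbc.1.trans hab.1, fun M hM => ?_⟩
  obtain ⟨h1, h2, h3⟩ := hab.2 hM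
  obtain ⟨h4, h5, h6⟩ := hbc.2 h3
  refine ⟨h1, h2, ?_⟩
  have : M ∩ c.A = (M ∩ b.A) ∩ c.A := by
    rw [Set.inter_assoc, Set.inter_eq_self_of_subset_right hbc.1]
  rwa [this]

lemma le_A_univ {x y : Cond γ} (h : x.le y) (hy : y.A = Set.univ) : x.A = Set.univ :=
  Set.eq_univ_of_univ_subset (hy ▸ h.1)

/-- with equal ambient sets, `le` is just inclusion of the stationary systems -/
lemma le_S_subset {q' q : Cond γ} (h : q'.le q) (hA : q'.A ⊆ q.A) : q'.S ⊆ q.S := by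
  intro M hM
  obtain ⟨h1, _, h3⟩ := h.2 hM
  rwa [Set.inter_eq_self_of_subset_left (h1.trans hA)] at h3

/-- monotonicity of largeness under same-ambient shrinking -/
lemma ILarge_mono {l : ℕ} {F : Set γ → γ} {c : γ → γ → Fin l} {M : Set γ} {i : Fin l}
    {q' q : Cond γ} (h : q'.le q) (hA : q'.A ⊆ q.A) (hq : q.IsCond) :
    ILarge F c M q' i → ILarge F c M q i := by
  intro hst
  have hAA : q'.A = q.A := Set.Subset.antisymm hA h.1
  constructor
  · intro K hK
    exact hq.2.1 hK.1
  · intro C hC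
    rw [← hAA] at hC
    obtain ⟨K, hK1, hK2⟩ := hst.2 C hC
    exact ⟨K, ⟨le_S_subset h hA hK1.1, hK1.2⟩, hK2⟩

/-- shrinking a condition by a nonstationary set -/
lemma shrink_cond {p : Cond γ} (hp : p.IsCond) {T : Set (Set γ)}
    (hT : T ⊆ smallSubsets p.A) (hTn : ¬ IsStationaryIn p.A T) :
    (Cond.mk p.A (p.S \ T)).IsCond ∧ (Cond.mk p.A (p.S \ T)).le p := by
  have hstat := stat_diff hp.2 hT hTn
  constructor
  · exact ⟨hp.1, hstat⟩
  · refine ⟨subset_rfl, fun M hM => ?_⟩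
    have h1 := hp.2.1 hM.1
    exact ⟨h1.1, h1.2, by rw [Set.inter_eq_self_of_subset_left h1.1]; exact hM.1⟩

/-- the record produced at each stage of the exhaustion -/
def Rec' {l : ℕ} (F : Set γ → γ) (c : γ → γ → Fin l) (p q : Cond γ)
    (ij : Fin l × Fin l) : Prop :=
  (∀ M ∈ p.S, ¬ ILarge F c M q ij.1) ∨ (∀ K ∈ q.S, ¬ ILarge F c K p ij.2)

lemma Rec'_mono {l : ℕ} {F : Set γ → γ} {c : γ → γ → Fin l} {p q P Q : Cond γ}
    {ij : Fin l × Fin l} (hp : p.IsCond) (hq : q.IsCond)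
    (hP : P.le p) (hPA : P.A ⊆ p.A) (hQ : Q.le q) (hQA : Q.A ⊆ q.A) :
    Rec' F c p q ij → Rec' F c P Q ij := by
  rintro (h | h)
  · left
    intro M hM hIL
    exact h M (le_S_subset hP hPA hM) (ILarge_mono hQ hQA hq hIL)
  · right
    intro K hK hIL
    exact h K (le_S_subset hQ hQA hK) (ILarge_mono hP hPA hp hIL)

end Aux5

open Set in
/- STATEMENT 18: exhaustion lemma for saturated pairs (Lemma 5.9, in the
countable stationary tower, with the `oneislarge` pigeonhole lemma as a
hypothesis): there are colors `(i,j)` and a condition `p₁ ≤ p₀` such that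
below every `p₂ ≤ p₁` one can split into an `(i,j)`-saturated pair. -/
theorem stmt_18 {γ : Type*} {l : ℕ} (hl : 0 < l)
    (F : Set γ → γ) (c : γ → γ → Fin l)
    (p₀ : Cond γ) (hp₀ : p₀.IsCond)
    (honelarge : ∀ p q : Cond γ, p.IsCond → q.IsCond → p.le p₀ → q.le p₀ →
      ∀ M ∈ p.S, ∀ K ∈ q.S,
        ∃ i j : Fin l, ILarge F c M q i ∧ ILarge F c K p j) :
    ∃ i j : Fin l, ∃ p₁ : Cond γ, p₁.IsCond ∧ p₁.le p₀ ∧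
      ∀ p₂ : Cond γ, p₂.IsCond → p₂.le p₁ →
        ∃ p q : Cond γ, p.IsCond ∧ q.IsCond ∧ p.le p₂ ∧ q.le p₂ ∧
          Saturated F c p q i j := by
  classical
  by_contra hcon
  push_neg at hcon
  -- the lifted top condition with ambient set `univ`
  set UU : Cond γ := ⟨Set.univ, {M | M.Countable ∧ M ∩ p₀.A ∈ p₀.S}⟩ with hUUdef
  have hUUc : UU.IsCond := by
    refine ⟨?_, lift_stationary hp₀.2⟩
    obtain ⟨a, _⟩ := hp₀.1
    exact ⟨a, trivial⟩
  have hUUle : UU.le p₀ :=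
    ⟨Set.subset_univ _, fun M hM => ⟨Set.subset_univ M, hM.1, hM.2⟩⟩
  have hUA : UU.A = Set.univ := rfl
  -- Step 1: a condition below which no color pair has a saturated split
  have KC : ∀ L : List (Fin l × Fin l), ∃ r : Cond γ, r.IsCond ∧ r.le UU ∧
      ∀ ij ∈ L, ∀ p q : Cond γ, p.IsCond → q.IsCond → p.le r → q.le r →
        ¬ Saturated F c p q ij.1 ij.2 := by
    intro L
    induction L with
    | nil => exact ⟨UU, hUUc, Cond.le_refl' hUUc, by simp⟩
    | cons ij L ih =>
      obtain ⟨r', hr'c, hr'le, hr'⟩ := ih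
      obtain ⟨p₂, hp₂c, hp₂le, hp₂⟩ :=
        hcon ij.1 ij.2 r' hr'c (Cond.le_trans' hr'le hUUle)
      refine ⟨p₂, hp₂c, Cond.le_trans' hp₂le hr'le, ?_⟩
      intro ij' hij' p q hpc hqc hpl hql
      rcases List.mem_cons.1 hij' with rfl | hmem
      · intro hSat
        exact hp₂ p q hpc hqc hpl hql hSat
      · exact hr' ij' hmem p q hpc hqc (Cond.le_trans' hpl hp₂le)
          (Cond.le_trans' hql hp₂le)
  obtain ⟨r, hrc, hrle, hKill⟩ := KC (Finset.univ : Finset (Fin l × Fin l)).toList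
  have hKill' : ∀ (i j : Fin l), ∀ p q : Cond γ, p.IsCond → q.IsCond →
      p.le r → q.le r → ¬ Saturated F c p q i j := by
    intro i j
    exact hKill (i, j) (Finset.mem_toList.2 (Finset.mem_univ _))
  have hrA : r.A = Set.univ := le_A_univ hrle hUA
  -- Step 2: exhaust all colors below r
  have ST : ∀ L : List (Fin l × Fin l), ∃ p q : Cond γ, p.IsCond ∧ q.IsCond ∧
      p.le r ∧ q.le r ∧ ∀ ij ∈ L, Rec' F c p q ij := by
    intro L
    induction L with
    | nil => exact ⟨r, r, hrc, hrc, Cond.le_refl' hrc, Cond.le_refl' hrc, by simp⟩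
    | cons ij L ih =>
      obtain ⟨p, q, hpc, hqc, hpr, hqr, hrec⟩ := ih
      have hpA : p.A = Set.univ := le_A_univ hpr hrA
      have hqA : q.A = Set.univ := le_A_univ hqr hrA
      have hnosat : ¬ Saturated F c p q ij.1 ij.2 := hKill' ij.1 ij.2 p q hpc hqc hpr hqr
      rw [Saturated] at hnosat
      push_neg at hnosat
      obtain ⟨p', hp'c, hp'le, q', hq'c, hq'le, hfail⟩ := hnosat
      have hp'A : p'.A = Set.univ := le_A_univ hp'le hpA
      have hq'A : q'.A = Set.univ := le_A_univ hq'le hqA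
      rcases Classical.em (IsStationaryIn p'.A {M | M ∈ p'.S ∧ ILarge F c M q' ij.1})
        with hSt | hfail
      case inl =>
        replace hfail := hfail hSt
        -- shrink q'
        set T : Set (Set γ) := {K ∈ q'.S | ILarge F c K p' ij.2} with hT
        have hTsub : T ⊆ smallSubsets q'.A := fun K hK => hq'c.2.1 hK.1
        obtain ⟨hQc, hQle⟩ := shrink_cond hq'c hTsub hfail
        set Q : Cond γ := ⟨q'.A, q'.S \ T⟩ with hQ
        have hQA : Q.A = Set.univ := hq'A
        have hQleq : Q.le q := Cond.le_trans' hQle hq'le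
        refine ⟨p', Q, hp'c, hQc, Cond.le_trans' hp'le hpr,
          Cond.le_trans' hQleq hqr, ?_⟩
        intro ij' hij'
        rcases List.mem_cons.1 hij' with rfl | hmem
        · right
          intro K hK hIL
          exact hK.2 ⟨hK.1, hIL⟩
        · exact Rec'_mono hpc hqc hp'le (by rw [hp'A, hpA]) hQleq (by rw [hQA, hqA])
            (hrec ij' hmem)
      case inr =>
        -- shrink p'
        set T : Set (Set γ) := {M ∈ p'.S | ILarge F c M q' ij.1} with hT
        have hTsub : T ⊆ smallSubsets p'.A := fun M hM => hp'c.2.1 hM.1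
        obtain ⟨hPc, hPle⟩ := shrink_cond hp'c hTsub hfail
        set P : Cond γ := ⟨p'.A, p'.S \ T⟩ with hP
        have hPA : P.A = Set.univ := hp'A
        have hPlep : P.le p := Cond.le_trans' hPle hp'le
        refine ⟨P, q', hPc, hq'c, Cond.le_trans' hPlep hpr,
          Cond.le_trans' hq'le hqr, ?_⟩
        intro ij' hij'
        rcases List.mem_cons.1 hij' with rfl | hmem
        · left
          intro M hM hIL
          exact hM.2 ⟨hM.1, hIL⟩
        · exact Rec'_mono hpc hqc hPlep (by rw [hPA, hpA]) hq'le (by rw [hq'A, hqA])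
            (hrec ij' hmem)
  obtain ⟨p, q, hpc, hqc, hpr, hqr, hrec⟩ := ST (Finset.univ : Finset (Fin l × Fin l)).toList
  obtain ⟨M, hM⟩ := hpc.2.nonempty'
  obtain ⟨K, hK⟩ := hqc.2.nonempty'
  obtain ⟨i, j, hMi, hKj⟩ := honelarge p q hpc hqc
    (Cond.le_trans' hpr (Cond.le_trans' hrle hUUle))
    (Cond.le_trans' hqr (Cond.le_trans' hrle hUUle)) M hM K hK
  rcases hrec (i, j) (Finset.mem_toList.2 (Finset.mem_univ _)) with h | h
  · exact h M hM hMi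
  · exact h K hK hKj
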